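/- Convexity in the cycle-breaking proof: fix constants p_1, ..., p_{n−1} ∈ (0,1) with n ≥ 4. Define f_0(x) = p_{n−2}/x and f_k(x) = p_{n−2−k}/(1 − f_{k−1}(x)) for 1 ≤ k ≤ n−3, on an interval where all denominators are positive and all f_k(x) ∈ (0,1). Then each f_k is strictly convex on this interval (f_k'' > 0), and consequently the function g(x) = f_{n−3}(x) · p_{n−1}/(1 − x) has the property that h(x) = f_{n−3}(x) + f_{n−3}'(x)(1−x) is strictly increasing; hence g is either strictly monotonic on the interval or first decreasing then increasing, so g attains its maximum over any closed subinterval at an endpoint. -/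

import Mathlib

private lemma mobius_hasDerivAt (A B C D : ℝ) {x : ℝ} (hx : C * x + D ≠ 0) :
    HasDerivAt (fun y => (A * y + B) / (C * y + D)) ((A * D - B * C) / (C * x + D) ^ 2) x := by
  have h1 : HasDerivAt (fun y : ℝ => A * y + B) A x := by
    simpa using ((hasDerivAt_id x).const_mul A).add_const B
  have h2 : HasDerivAt (fun y : ℝ => C * y + D) C x := by
    simpa using ((hasDerivAt_id x).const_mul C).add_const D
  have h3 := h1.fun_div h2 hx
  refine h3.congr_deriv ?_
  ring

private lemma mobius_hasDerivAt2 (E C D : ℝ) {x : ℝ} (hx : C * x + D ≠ 0) :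
    HasDerivAt (fun y => E / (C * y + D) ^ 2) (-2 * C * E / (C * x + D) ^ 3) x := by
  have h2 : HasDerivAt (fun y : ℝ => C * y + D) C x := by
    simpa using ((hasDerivAt_id x).const_mul C).add_const D
  have h3 : HasDerivAt (fun y : ℝ => (C * y + D) ^ 2) (2 * (C * x + D) * C) x := by
    simpa using h2.fun_pow 2
  have h4 := (hasDerivAt_const x E).fun_div h3 (pow_ne_zero 2 hx)
  refine h4.congr_deriv ?_
  field_simp
  ring

theorem stmt14 {n : ℕ} (hn : 4 ≤ n) (p : ℕ → ℝ)
    (hp : ∀ k, 1 ≤ k → k ≤ n - 1 → 0 < p k ∧ p k < 1)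
    (f : ℕ → ℝ → ℝ)
    (hf0 : ∀ x : ℝ, f 0 x = p (n - 2) / x)
    (hfk : ∀ (k : ℕ) (x : ℝ), f (k + 1) x = p (n - 3 - k) / (1 - f k x))
    (a b : ℝ) (ha : 0 < a) (hab : a ≤ b) (hb : b < 1)
    (hrange : ∀ x ∈ Set.Icc a b, ∀ k ≤ n - 3, 0 < f k x ∧ f k x < 1) :
    (∀ k ≤ n - 3, StrictConvexOn ℝ (Set.Icc a b) (f k)) ∧
    StrictMonoOn (fun x => f (n - 3) x + deriv (f (n - 3)) x * (1 - x)) (Set.Icc a b) ∧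
    (∀ c d : ℝ, a ≤ c → c ≤ d → d ≤ b →
      ∀ x ∈ Set.Icc c d,
        f (n - 3) x * (p (n - 1) / (1 - x)) ≤
          max (f (n - 3) c * (p (n - 1) / (1 - c)))
              (f (n - 3) d * (p (n - 1) / (1 - d)))) := by
  have hp2 : 0 < p (n - 2) := (hp (n - 2) (by omega) (by omega)).1
  -- the key Möbius representation
  have key : ∀ k ≤ n - 3, ∃ A B C D : ℝ, 0 < C ∧ A * D - B * C < 0 ∧
      ∃ U : Set ℝ, IsOpen U ∧ Set.Icc a b ⊆ U ∧
        ∀ x ∈ U, 0 < C * x + D ∧ f k x = (A * x + B) / (C * x + D) := by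
    intro k
    induction k with
    | zero =>
      intro _
      refine ⟨0, p (n - 2), 1, 0, one_pos, by nlinarith, Set.Ioi 0, isOpen_Ioi,
        fun x hx => lt_of_lt_of_le ha hx.1, fun x hx => ?_⟩
      have hx0 : 0 < x := hx
      constructor
      · linarith
      · rw [hf0]
        rw [zero_mul, zero_add, one_mul, add_zero]
    | succ k ih =>
      intro hk1
      have hk : k ≤ n - 3 := by omega
      obtain ⟨A, B, C, D, hC, hΔ, U, hUo, hUi, hU⟩ := ih hk
      have hq : 0 < p (n - 3 - k) := (hp (n - 3 - k) (by omega) (by omega)).1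
      set q := p (n - 3 - k) with hqdef
      -- denominator of next level positive on Icc a b
      have hpos : ∀ x ∈ Set.Icc a b, 0 < (C - A) * x + (D - B) := by
        intro x hx
        obtain ⟨hden, heq⟩ := hU x (hUi hx)
        have hf1 : f k x < 1 := (hrange x hx k hk).2
        have hfactor : (C - A) * x + (D - B) = (C * x + D) * (1 - f k x) := by
          rw [heq]; field_simp; ring
        rw [hfactor]
        exact mul_pos hden (by linarith)
      have haU : a ∈ Set.Icc a b := ⟨le_refl a, hab⟩
      have hdena : 0 < C * a + D := (hU a (hUi haU)).1
      have hdena' : 0 < (C - A) * a + (D - B) := hpos a haU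
      have hCA : 0 < C - A := by
        have hid : (C - A) * (C * a + D) = C * ((C - A) * a + (D - B)) - (A * D - B * C) := by
          ring
        nlinarith [mul_pos hC hdena']
      refine ⟨q * C, q * D, C - A, D - B, hCA, ?_, U ∩ {x | 0 < (C - A) * x + (D - B)},
        hUo.inter (isOpen_lt continuous_const (by continuity)), fun x hx => ⟨hUi hx, hpos x hx⟩,
        fun x hx => ?_⟩
      · have : q * C * (D - B) - q * D * (C - A) = q * (A * D - B * C) := by ring
        rw [this]
        exact mul_neg_of_pos_of_neg hq hΔ
      · obtain ⟨hxU, hxpos⟩ := hx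
        obtain ⟨hden, heq⟩ := hU x hxU
        refine ⟨hxpos, ?_⟩
        rw [Set.mem_setOf_eq] at hxpos
        have hd1 : C * x + D ≠ 0 := hden.ne'
        have hd2 : (C - A) * x + (D - B) ≠ 0 := hxpos.ne'
        have hstep : 1 - (A * x + B) / (C * x + D) = ((C - A) * x + (D - B)) / (C * x + D) := by
          rw [eq_div_iff hd1, sub_mul, div_mul_cancel₀ _ hd1]
          ring
        rw [hfk, heq, hstep, div_div_eq_mul_div]
        rw [div_eq_div_iff hd2 hd2]
        ring
  -- derivative facts from a Möbius representation
  have hp1 : 0 < p (n - 1) := (hp (n - 1) (by omega) (by omega)).1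
  -- Part 1: strict convexity
  have convex_part : ∀ k ≤ n - 3, StrictConvexOn ℝ (Set.Icc a b) (f k) := by
    intro k hk
    obtain ⟨A, B, C, D, hC, hΔ, U, hUo, hUi, hU⟩ := key k hk
    have heq : ∀ x ∈ U, f k =ᶠ[nhds x] fun y => (A * y + B) / (C * y + D) := fun x hx =>
      Filter.eventuallyEq_of_mem (hUo.mem_nhds hx) fun y hy => (hU y hy).2
    have hfd : ∀ x ∈ U, HasDerivAt (f k) ((A * D - B * C) / (C * x + D) ^ 2) x := fun x hx =>
      (mobius_hasDerivAt A B C D (hU x hx).1.ne').congr_of_eventuallyEq (heq x hx)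
    have hd1 : ∀ x ∈ U, deriv (f k) x = (A * D - B * C) / (C * x + D) ^ 2 := fun x hx =>
      (hfd x hx).deriv
    have heq2 : ∀ x ∈ U, deriv (f k) =ᶠ[nhds x] fun y => (A * D - B * C) / (C * y + D) ^ 2 :=
      fun x hx => Filter.eventuallyEq_of_mem (hUo.mem_nhds hx) fun y hy => hd1 y hy
    have hfd2 : ∀ x ∈ U,
        HasDerivAt (deriv (f k)) (-2 * C * (A * D - B * C) / (C * x + D) ^ 3) x := fun x hx =>
      (mobius_hasDerivAt2 (A * D - B * C) C D (hU x hx).1.ne').congr_of_eventuallyEq (heq2 x hx)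
    apply strictConvexOn_of_deriv2_pos (convex_Icc a b)
    · exact fun x hx => ((hfd x (hUi hx)).continuousAt).continuousWithinAt
    · intro x hx
      rw [interior_Icc] at hx
      have hxU : x ∈ U := hUi (Set.Ioo_subset_Icc_self hx)
      have h2 : deriv^[2] (f k) x = deriv (deriv (f k)) x := rfl
      rw [h2, (hfd2 x hxU).deriv]
      exact div_pos (by nlinarith) (pow_pos (hU x hxU).1 3)
  refine ⟨convex_part, ?_⟩
  -- data for k = n - 3
  obtain ⟨A, B, C, D, hC, hΔ, U, hUo, hUi, hU⟩ := key (n - 3) le_rfl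
  have heq : ∀ x ∈ U, f (n - 3) =ᶠ[nhds x] fun y => (A * y + B) / (C * y + D) := fun x hx =>
    Filter.eventuallyEq_of_mem (hUo.mem_nhds hx) fun y hy => (hU y hy).2
  have hfd : ∀ x ∈ U, HasDerivAt (f (n - 3)) ((A * D - B * C) / (C * x + D) ^ 2) x := fun x hx =>
    (mobius_hasDerivAt A B C D (hU x hx).1.ne').congr_of_eventuallyEq (heq x hx)
  have hd1 : ∀ x ∈ U, deriv (f (n - 3)) x = (A * D - B * C) / (C * x + D) ^ 2 := fun x hx =>
    (hfd x hx).deriv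
  -- the function h
  set h : ℝ → ℝ := fun x => f (n - 3) x + deriv (f (n - 3)) x * (1 - x) with hhdef
  set H : ℝ → ℝ := fun y => (A * y + B) / (C * y + D) + (A * D - B * C) / (C * y + D) ^ 2 * (1 - y)
    with hHdef
  have hhH : ∀ x ∈ U, h x = H x := by
    intro x hx
    simp only [hhdef, hHdef, (hU x hx).2, hd1 x hx]
  have heqh : ∀ x ∈ U, h =ᶠ[nhds x] H := fun x hx =>
    Filter.eventuallyEq_of_mem (hUo.mem_nhds hx) fun y hy => hhH y hy
  have hHd : ∀ x ∈ U, HasDerivAt H (-2 * C * (A * D - B * C) * (1 - x) / (C * x + D) ^ 3) x := by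
    intro x hx
    have hden := (hU x hx).1
    have h1 := mobius_hasDerivAt A B C D hden.ne'
    have h2 := mobius_hasDerivAt2 (A * D - B * C) C D hden.ne'
    have h3 : HasDerivAt (fun y : ℝ => 1 - y) (-1) x := by
      simpa using (hasDerivAt_id x).const_sub 1
    have h4 := h1.fun_add (h2.fun_mul h3)
    refine h4.congr_deriv ?_
    field_simp
    ring
  have hhd : ∀ x ∈ U, HasDerivAt h (-2 * C * (A * D - B * C) * (1 - x) / (C * x + D) ^ 3) x :=
    fun x hx => (hHd x hx).congr_of_eventuallyEq (heqh x hx)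
  have mono_part : StrictMonoOn h (Set.Icc a b) := by
    apply strictMonoOn_of_deriv_pos (convex_Icc a b)
    · exact fun x hx => ((hhd x (hUi hx)).continuousAt).continuousWithinAt
    · intro x hx
      rw [interior_Icc] at hx
      have hxU : x ∈ U := hUi (Set.Ioo_subset_Icc_self hx)
      rw [(hhd x hxU).deriv]
      have hx1 : x < 1 := lt_of_lt_of_le hx.2 (le_of_lt hb)
      have hprod := mul_pos (mul_pos hC (neg_pos.mpr hΔ)) (show (0:ℝ) < 1 - x by linarith)
      exact div_pos (by nlinarith [hprod]) (pow_pos (hU x hxU).1 3)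
  refine ⟨mono_part, ?_⟩
  -- Part 3
  intro c d hac hcd hdb x hx
  set g : ℝ → ℝ := fun x => f (n - 3) x * (p (n - 1) / (1 - x)) with hgdef
  have hgd : ∀ y ∈ Set.Icc a b, HasDerivAt g (p (n - 1) * h y / (1 - y) ^ 2) y := by
    intro y hy
    have hyU : y ∈ U := hUi hy
    have hy1 : y < 1 := lt_of_le_of_lt hy.2 hb
    have hden1 : (1 : ℝ) - y ≠ 0 := by linarith
    have h3 : HasDerivAt (fun z : ℝ => 1 - z) (-1) y := by
      simpa using (hasDerivAt_id y).const_sub 1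
    have h5 : HasDerivAt (fun z : ℝ => p (n - 1) / (1 - z))
        ((0 * (1 - y) - p (n - 1) * (-1)) / (1 - y) ^ 2) y :=
      (hasDerivAt_const y (p (n - 1))).fun_div h3 hden1
    have h6 := (hfd y hyU).fun_mul h5
    refine h6.congr_deriv ?_
    have hden := (hU y hyU).1
    simp only [hhdef, hd1 y hyU]
    field_simp
    ring
  have hxab : x ∈ Set.Icc a b := ⟨le_trans hac hx.1, le_trans hx.2 hdb⟩
  have hsub : Set.Icc c d ⊆ Set.Icc a b := Set.Icc_subset_Icc hac hdb
  rcases le_or_gt (h x) 0 with hneg | hpos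
  · -- g x ≤ g c
    refine le_max_of_le_left ?_
    rcases eq_or_lt_of_le hx.1 with hcx | hcx
    · rw [← hcx]
    · have hanti : StrictAntiOn g (Set.Icc c x) := by
        apply strictAntiOn_of_deriv_neg (convex_Icc c x)
        · intro y hy
          have hyab : y ∈ Set.Icc a b := ⟨le_trans hac hy.1, le_trans hy.2 hxab.2⟩
          exact ((hgd y hyab).continuousAt).continuousWithinAt
        · intro y hy
          rw [interior_Icc] at hy
          have hyab : y ∈ Set.Icc a b := ⟨le_trans hac hy.1.le, le_trans hy.2.le hxab.2⟩
          rw [(hgd y hyab).deriv]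
          have hhy : h y < h x := mono_part hyab hxab hy.2
          have hy1 : y < 1 := lt_of_le_of_lt hyab.2 hb
          apply div_neg_of_neg_of_pos
          · exact mul_neg_of_pos_of_neg hp1 (by linarith)
          · exact pow_pos (by linarith : (0:ℝ) < 1 - y) 2
      exact (hanti (Set.left_mem_Icc.mpr hcx.le) (Set.right_mem_Icc.mpr hcx.le) hcx).le
  · -- g x ≤ g d
    refine le_max_of_le_right ?_
    rcases eq_or_lt_of_le hx.2 with hxd | hxd
    · rw [hxd]
    · have hmono : StrictMonoOn g (Set.Icc x d) := by
        apply strictMonoOn_of_deriv_pos (convex_Icc x d)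
        · intro y hy
          have hyab : y ∈ Set.Icc a b := ⟨le_trans hxab.1 hy.1, le_trans hy.2 hdb⟩
          exact ((hgd y hyab).continuousAt).continuousWithinAt
        · intro y hy
          rw [interior_Icc] at hy
          have hyab : y ∈ Set.Icc a b := ⟨le_trans hxab.1 hy.1.le, le_trans hy.2.le hdb⟩
          rw [(hgd y hyab).deriv]
          have hhy : h x < h y := mono_part hxab hyab hy.1
          have hy1 : y < 1 := lt_of_le_of_lt hyab.2 hb
          apply div_pos
          · exact mul_pos hp1 (by linarith)
          · exact pow_pos (by linarith : (0:ℝ) < 1 - y) 2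
      exact (hmono (Set.left_mem_Icc.mpr hxd.le) (Set.right_mem_Icc.mpr hxd.le) hxd).le
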